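/- Let p_i ∈ (0,1), x_i ∈ {0,1}, c_i ∈ ℝ^d, S_n = Σ c_i(x_i - p_i), V_n = Σ c_i c_i' p_i(1-p_i) with smallest eigenvalue λ_min > 0 and largest eigenvalue λ_max. Set L_c = max_i ‖c_i‖ and L_λ = λ_max/λ_min. Let u(θ) = log K_n^θ (the log-likelihood ratio of the logistic strategy). If ‖V_n^{-1}S_n‖ ≤ 1/(3 L_c L_λ), then any maximizer θ̂ of u satisfies ‖θ̂‖ ≤ 3 L_λ ‖V_n^{-1}S_n‖. -/

import Mathlib

open Real RealInnerProductSpace Finset Matrix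

private lemma mle_den_pos {p : ℝ} (t : ℝ) (hp0 : 0 ≤ p) (hp1 : p ≤ 1) :
    0 < 1 - p + p * exp t := by
  rcases eq_or_lt_of_le hp0 with h | h
  · simp [← h]
  · nlinarith [mul_pos h (exp_pos t)]

private lemma mle_key_ineq {p : ℝ} (t : ℝ) (hp0 : 0 ≤ p) (hp1 : p ≤ 1) :
    t ^ 2 * exp (-|t|) ≤ t * (exp t - 1) / (1 - p + p * exp t) := by
  rw [le_div_iff₀ (mle_den_pos t hp0 hp1)]
  rcases le_or_gt 0 t with ht | ht
  · rw [abs_of_nonneg ht]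
    have h1 : exp (-t) * exp t = 1 := by rw [← exp_add]; simp
    have h2 : t + 1 ≤ exp t := add_one_le_exp t
    have h4 : (0:ℝ) < exp (-t) := exp_pos _
    have h5 : (0:ℝ) < exp t := exp_pos _
    have hE1 : 1 ≤ exp t := by linarith
    have hden : 1 - p + p * exp t ≤ exp t := by nlinarith
    have hnn : 0 ≤ t ^ 2 * exp (-t) := by positivity
    calc t ^ 2 * exp (-t) * (1 - p + p * exp t) ≤ t ^ 2 * exp (-t) * exp t :=
          mul_le_mul_of_nonneg_left hden hnn
      _ = t ^ 2 := by nlinarith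
      _ ≤ t * (exp t - 1) := by nlinarith
  · rw [abs_of_neg ht, neg_neg]
    have h2 : -t + 1 ≤ exp (-t) := add_one_le_exp (-t)
    have h1 : exp (-t) * exp t = 1 := by rw [← exp_add]; simp
    have h5 : (0:ℝ) < exp t := exp_pos _
    have h6 : exp t ≤ 1 := exp_le_one_iff.2 ht.le
    have hden : 1 - p + p * exp t ≤ 1 := by nlinarith
    have h8 : 0 ≤ t * exp t - exp t + 1 := by nlinarith [mul_le_mul_of_nonneg_left h2 h5.le]
    have hnn : 0 ≤ t ^ 2 * exp t := by positivity
    calc t ^ 2 * exp t * (1 - p + p * exp t) ≤ t ^ 2 * exp t * 1 :=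
          mul_le_mul_of_nonneg_left hden hnn
      _ ≤ t * (exp t - 1) := by nlinarith [mul_nonpos_of_nonpos_of_nonneg ht.le h8]

private lemma mle_G_mono {p : ℝ} (hp0 : 0 ≤ p) (hp1 : p ≤ 1) {y z : ℝ} (hyz : y ≤ z) :
    p * exp y / (1 - p + p * exp y) ≤ p * exp z / (1 - p + p * exp z) := by
  rw [div_le_div_iff₀ (mle_den_pos y hp0 hp1) (mle_den_pos z hp0 hp1)]
  have h := exp_le_exp.2 hyz
  nlinarith [exp_pos y, exp_pos z,
    mul_nonneg hp0 (mul_nonneg (sub_nonneg.2 hp1) (sub_nonneg.2 h))]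

private lemma mle_F_mono {p : ℝ} (a : ℝ) (hp0 : 0 ≤ p) (hp1 : p ≤ 1) :
    Monotone fun s => a * (p * exp (s * a) / (1 - p + p * exp (s * a))) := by
  intro s t hst
  rcases le_or_gt 0 a with ha | ha
  · exact mul_le_mul_of_nonneg_left (mle_G_mono hp0 hp1 (by nlinarith)) ha
  · exact mul_le_mul_of_nonpos_left (mle_G_mono hp0 hp1 (by nlinarith)) ha.le

private lemma mle_log_deriv {p a : ℝ} (hp0 : 0 ≤ p) (hp1 : p ≤ 1) (s : ℝ) :
    HasDerivAt (fun s => log (1 + p * (exp (s * a) - 1)))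
      (a * (p * exp (s * a) / (1 - p + p * exp (s * a)))) s := by
  have h1 : HasDerivAt (fun s : ℝ => s * a) a s := hasDerivAt_mul_const a
  have h2 := h1.exp
  have h3 := ((h2.sub_const 1).const_mul p).const_add 1
  have hne : 1 + p * (exp (s * a) - 1) ≠ 0 := by
    have := mle_den_pos (s * a) hp0 hp1
    intro h
    rw [show (1:ℝ) + p * (exp (s*a) - 1) = 1 - p + p * exp (s*a) by ring] at h
    linarith
  have h4 := h3.log hne
  convert h4 using 1
  rw [show (1:ℝ) + p * (exp (s*a) - 1) = 1 - p + p * exp (s*a) by ring]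
  ring

private lemma mle_term_bound {p a s M : ℝ} (hp0 : 0 ≤ p) (hp1 : p ≤ 1) (hs : 0 < s)
    (hM : |s * a| ≤ M) :
    p * (1 - p) * (s * (exp (-M) * a ^ 2)) ≤
      a * (p * exp (s * a) / (1 - p + p * exp (s * a))) - p * a := by
  set t := s * a with ht
  have hden := mle_den_pos t hp0 hp1
  have hq : s * (exp (-M) * a ^ 2) ≤ a * (exp t - 1) / (1 - p + p * exp t) := by
    have hexpM : exp (-M) ≤ exp (-|t|) := exp_le_exp.2 (neg_le_neg hM)
    have h2 : t ^ 2 * exp (-M) ≤ t ^ 2 * exp (-|t|) :=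
      mul_le_mul_of_nonneg_left hexpM (sq_nonneg t)
    have h4 : t ^ 2 * exp (-M) ≤ t * (exp t - 1) / (1 - p + p * exp t) :=
      h2.trans (mle_key_ineq t hp0 hp1)
    rw [← mul_le_mul_iff_right₀ hs]
    calc s * (s * (exp (-M) * a ^ 2)) = t ^ 2 * exp (-M) := by rw [ht]; ring
      _ ≤ t * (exp t - 1) / (1 - p + p * exp t) := h4
      _ = s * (a * (exp t - 1) / (1 - p + p * exp t)) := by rw [ht]; ring
  calc p * (1 - p) * (s * (exp (-M) * a ^ 2))
      ≤ p * (1 - p) * (a * (exp t - 1) / (1 - p + p * exp t)) :=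
        mul_le_mul_of_nonneg_left hq (by nlinarith)
    _ = a * (p * exp t / (1 - p + p * exp t)) - p * a := by
        field_simp
        ring

private lemma mle_exp3 : (1:ℝ) < 3 * exp (-1) := by
  rw [Real.exp_neg]
  have h9 : exp 1 < 3 := by
    have := exp_one_lt_d9
    linarith
  have h10 : exp 1 * (exp 1)⁻¹ = 1 := mul_inv_cancel₀ (exp_pos 1).ne'
  nlinarith [exp_pos 1, inv_pos.2 (exp_pos 1)]

set_option maxHeartbeats 2000000 in
/-- Bound on the maximum likelihood estimate: if `‖V_n⁻¹S_n‖ ≤ 1/(3L_cL_λ)`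
then any maximizer `θ̂` of the log-capital `u` satisfies
`‖θ̂‖ ≤ 3L_λ‖V_n⁻¹S_n‖`. -/
theorem mle_bound {d n : ℕ} (hn : 0 < n)
    (p x : Fin n → ℝ) (c : Fin n → EuclideanSpace ℝ (Fin d))
    (hp : ∀ i, p i ∈ Set.Ioo (0:ℝ) 1)
    (hx : ∀ i, x i = 0 ∨ x i = 1)
    (V : Matrix (Fin d) (Fin d) ℝ)
    (hV : V = ∑ i, (p i * (1 - p i)) •
      Matrix.vecMulVec (fun j => c i j) (fun j => c i j))
    (S : Fin d → ℝ) (hS : S = ∑ i, (x i - p i) • (fun j => c i j))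
    (Lc : ℝ) (hLc : IsGreatest (Set.range fun i => ‖c i‖) Lc)
    (lmin lmax : ℝ)
    (hlmin : IsLeast (spectrum ℝ V) lmin)
    (hlmax : IsGreatest (spectrum ℝ V) lmax)
    (hlminpos : 0 < lmin)
    (u : EuclideanSpace ℝ (Fin d) → ℝ)
    (hu : ∀ θ, u θ = ⟪θ, ∑ i, x i • c i⟫
        - ∑ i, Real.log (1 + p i * (Real.exp ⟪θ, c i⟫ - 1)))
    (hsmall : ‖(EuclideanSpace.equiv (Fin d) ℝ).symm (V⁻¹ *ᵥ S)‖
        ≤ 1 / (3 * Lc * (lmax / lmin))) :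
    ∀ θhat : EuclideanSpace ℝ (Fin d), (∀ θ, u θ ≤ u θhat) →
      ‖θhat‖ ≤ 3 * (lmax / lmin)
        * ‖(EuclideanSpace.equiv (Fin d) ℝ).symm (V⁻¹ *ᵥ S)‖ := by
  intro θhat hmax
  set e := EuclideanSpace.equiv (Fin d) ℝ with he
  set w' : EuclideanSpace ℝ (Fin d) := e.symm (V⁻¹ *ᵥ S) with hw'
  set r := ‖w'‖ with hr
  set L := lmax / lmin with hL
  have hlmaxpos : 0 < lmax := lt_of_lt_of_le hlminpos (hlmax.2 hlmin.1)
  have hLpos : 0 < L := div_pos hlmaxpos hlminpos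
  by_contra hcon
  push_neg at hcon
  have hθpos : 0 < ‖θhat‖ :=
    lt_of_le_of_lt (by positivity) hcon
  -- V is Hermitian
  have hH : V.IsHermitian := by
    rw [Matrix.IsHermitian, hV]
    ext j k
    simp only [Matrix.conjTranspose_apply, Matrix.sum_apply, Matrix.smul_apply,
      Matrix.vecMulVec_apply, smul_eq_mul, star_trivial, star_sum, star_mul']
    exact Finset.sum_congr rfl fun i _ => by ring
  have hlo : ∀ j, lmin ≤ hH.eigenvalues j :=
    fun j => hlmin.2 (hH.eigenvalues_mem_spectrum_real j)
  have hhi : ∀ j, hH.eigenvalues j ≤ lmax :=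
    fun j => hlmax.2 (hH.eigenvalues_mem_spectrum_real j)
  -- invertibility
  have hdet : IsUnit V.det := by
    have h1 : V.det = ∏ j, hH.eigenvalues j := by
      simpa using hH.det_eq_prod_eigenvalues
    refine isUnit_iff_ne_zero.2 ?_
    rw [h1]
    exact (Finset.prod_pos fun j _ => lt_of_lt_of_le hlminpos (hlo j)).ne'
  have hVw : V *ᵥ (V⁻¹ *ᵥ S) = S := by
    rw [Matrix.mulVec_mulVec, Matrix.mul_nonsing_inv V hdet, Matrix.one_mulVec]
  -- the operator T
  set T : EuclideanSpace ℝ (Fin d) → EuclideanSpace ℝ (Fin d) :=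
    fun y => e.symm (V *ᵥ e y) with hT
  have hsym : ∀ a b : EuclideanSpace ℝ (Fin d), ⟪T a, b⟫ = ⟪a, T b⟫ := by
    intro a b
    simp only [hT, PiLp.inner_apply, RCLike.inner_apply', conj_trivial, he,
      EuclideanSpace.equiv, PiLp.coe_symm_continuousLinearEquiv, PiLp.coe_continuousLinearEquiv,
      WithLp.ofLp_toLp, Matrix.mulVec, dotProduct]
    calc ∑ j, (∑ k, V j k * a k) * b j = ∑ j, ∑ k, V j k * a k * b j := by
          simp [Finset.sum_mul]
      _ = ∑ k, ∑ j, V j k * a k * b j := Finset.sum_comm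
      _ = ∑ k, a k * ∑ j, V k j * b j := by
          refine Finset.sum_congr rfl fun k _ => ?_
          rw [Finset.mul_sum]
          refine Finset.sum_congr rfl fun j _ => ?_
          have hVs : V j k = V k j := by
            have h2 := congrFun (congrFun hH j) k
            simpa [Matrix.conjTranspose_apply] using h2.symm
          rw [hVs]; ring
  have hTB : ∀ j, T (hH.eigenvectorBasis j) = hH.eigenvalues j • hH.eigenvectorBasis j := by
    intro j
    have h1 := hH.mulVec_eigenvectorBasis j
    apply e.injective
    have h2 : e (T (hH.eigenvectorBasis j)) = V *ᵥ e (hH.eigenvectorBasis j) := by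
      simp [hT]
    rw [h2]
    have h3 : e (hH.eigenvectorBasis j) = ⇑(hH.eigenvectorBasis j) := rfl
    have h4 : e (hH.eigenvalues j • hH.eigenvectorBasis j)
        = hH.eigenvalues j • e (hH.eigenvectorBasis j) := rfl
    rw [h3, h4, h1]
    rfl
  -- spectral bounds for T
  have hpar : ∀ y : EuclideanSpace ℝ (Fin d),
      ‖y‖ ^ 2 = ∑ j, ⟪hH.eigenvectorBasis j, y⟫ ^ 2 := by
    intro y
    rw [← hH.eigenvectorBasis.repr.norm_map y, EuclideanSpace.norm_eq,
      Real.sq_sqrt (by positivity)]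
    refine Finset.sum_congr rfl fun j _ => ?_
    rw [hH.eigenvectorBasis.repr_apply_apply]
    simp [sq_abs]
  have hBT : ∀ j (y : EuclideanSpace ℝ (Fin d)),
      ⟪hH.eigenvectorBasis j, T y⟫ = hH.eigenvalues j * ⟪hH.eigenvectorBasis j, y⟫ := by
    intro j y
    rw [← hsym, hTB j, real_inner_smul_left]
  have hTlow : ∀ y : EuclideanSpace ℝ (Fin d), lmin * ‖y‖ ^ 2 ≤ ⟪y, T y⟫ := by
    intro y
    have hquad : ⟪y, T y⟫ = ∑ j, hH.eigenvalues j * ⟪hH.eigenvectorBasis j, y⟫ ^ 2 := by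
      rw [← hH.eigenvectorBasis.sum_inner_mul_inner y (T y)]
      refine Finset.sum_congr rfl fun j _ => ?_
      rw [hBT, real_inner_comm y (hH.eigenvectorBasis j)]
      ring
    rw [hquad, hpar y, Finset.mul_sum]
    exact Finset.sum_le_sum fun j _ =>
      mul_le_mul_of_nonneg_right (hlo j) (sq_nonneg _)
  have hTnorm : ∀ y : EuclideanSpace ℝ (Fin d), ‖T y‖ ≤ lmax * ‖y‖ := by
    intro y
    have hTx : ‖T y‖ ^ 2 = ∑ j, (hH.eigenvalues j * ⟪hH.eigenvectorBasis j, y⟫) ^ 2 := by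
      rw [hpar (T y)]
      exact Finset.sum_congr rfl fun j _ => by rw [hBT]
    have hle : ‖T y‖ ^ 2 ≤ (lmax * ‖y‖) ^ 2 := by
      rw [hTx, mul_pow, hpar y, Finset.mul_sum]
      refine Finset.sum_le_sum fun j _ => ?_
      rw [mul_pow]
      have : hH.eigenvalues j ^ 2 ≤ lmax ^ 2 := by nlinarith [hlo j, hhi j]
      exact mul_le_mul_of_nonneg_right this (sq_nonneg _)
    have h1 := Real.sqrt_le_sqrt hle
    rwa [Real.sqrt_sq (norm_nonneg _),
      Real.sqrt_sq (mul_nonneg hlmaxpos.le (norm_nonneg _))] at h1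
  -- the coefficients
  set a : Fin n → ℝ := fun i => ⟪θhat, c i⟫ with ha
  have habound : ∀ i, |a i| ≤ ‖θhat‖ * Lc := by
    intro i
    exact (abs_real_inner_le_norm θhat (c i)).trans
      (mul_le_mul_of_nonneg_left (hLc.2 ⟨i, rfl⟩) (norm_nonneg _))
  have haexp : ∀ i, a i = ∑ j, θhat j * c i j := by
    intro i
    rw [ha]
    simp [PiLp.inner_apply, RCLike.inner_apply', mul_comm]
  have hVjk : ∀ j k, V j k = ∑ i, p i * (1 - p i) * (c i j * c i k) := by
    intro j k
    rw [hV]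
    simp only [Matrix.sum_apply, Matrix.smul_apply, Matrix.vecMulVec_apply, smul_eq_mul]
  -- quadratic form identity
  have hquadid : ⟪θhat, T θhat⟫ = ∑ i, p i * (1 - p i) * a i ^ 2 := by
    simp only [hT, PiLp.inner_apply, RCLike.inner_apply', conj_trivial, he,
      EuclideanSpace.equiv, PiLp.coe_symm_continuousLinearEquiv, PiLp.coe_continuousLinearEquiv,
      WithLp.ofLp_toLp, Matrix.mulVec, dotProduct]
    calc ∑ j, θhat j * ∑ k, V j k * θhat k
        = ∑ j, ∑ k, ∑ i, p i * (1 - p i) * (c i j * c i k) * (θhat j * θhat k) := by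
          refine Finset.sum_congr rfl fun j _ => ?_
          rw [Finset.mul_sum]
          refine Finset.sum_congr rfl fun k _ => ?_
          rw [hVjk j k, Finset.sum_mul, Finset.mul_sum]
          exact Finset.sum_congr rfl fun i _ => by ring
      _ = ∑ j, ∑ i, ∑ k, p i * (1 - p i) * (c i j * c i k) * (θhat j * θhat k) := by
          exact Finset.sum_congr rfl fun j _ => Finset.sum_comm
      _ = ∑ i, ∑ j, ∑ k, p i * (1 - p i) * (c i j * c i k) * (θhat j * θhat k) :=
          Finset.sum_comm
      _ = ∑ i, p i * (1 - p i) * a i ^ 2 := by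
          refine Finset.sum_congr rfl fun i _ => ?_
          rw [haexp i, sq, Finset.sum_mul_sum, Finset.mul_sum]
          refine Finset.sum_congr rfl fun j _ => ?_
          rw [Finset.mul_sum]
          exact Finset.sum_congr rfl fun k _ => by ring
  -- ip facts
  have hTw' : T w' = e.symm S := by
    rw [hT, hw']
    simp [hVw]
  have hip_eq : ∑ i, (x i - p i) * a i = ⟪θhat, T w'⟫ := by
    rw [hTw']
    have hSj : ∀ j, S j = ∑ i, (x i - p i) * c i j := by
      intro j
      rw [hS]
      simp
    simp only [PiLp.inner_apply, RCLike.inner_apply', conj_trivial, he,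
      EuclideanSpace.equiv, PiLp.coe_symm_continuousLinearEquiv, WithLp.ofLp_toLp]
    refine Eq.symm ?_
    calc ∑ j, θhat j * S j
        = ∑ j, ∑ i, (x i - p i) * (θhat j * c i j) := by
          refine Finset.sum_congr rfl fun j _ => ?_
          rw [hSj j, Finset.mul_sum]
          exact Finset.sum_congr rfl fun i _ => by ring
      _ = ∑ i, ∑ j, (x i - p i) * (θhat j * c i j) := Finset.sum_comm
      _ = ∑ i, (x i - p i) * a i := by
          refine Finset.sum_congr rfl fun i _ => ?_
          rw [haexp i, Finset.mul_sum]
  have hip_le : ⟪θhat, T w'⟫ ≤ lmax * (‖θhat‖ * r) := by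
    calc ⟪θhat, T w'⟫ ≤ ‖θhat‖ * ‖T w'‖ := real_inner_le_norm _ _
      _ ≤ ‖θhat‖ * (lmax * r) := mul_le_mul_of_nonneg_left (hTnorm w') (norm_nonneg _)
      _ = lmax * (‖θhat‖ * r) := by ring
  -- the 1-D function and its derivative
  set AA := (⟪θhat, ∑ i, x i • c i⟫ : ℝ) with hAAdef
  set D : ℝ → ℝ := fun s =>
    AA - ∑ i, a i * (p i * exp (s * a i) / (1 - p i + p i * exp (s * a i))) with hD
  have hψderiv : ∀ s, HasDerivAt (fun s => u (s • θhat)) (D s) s := by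
    intro s
    have hfun : (fun s => u (s • θhat))
        = fun s => s * AA - ∑ i, log (1 + p i * (exp (s * a i) - 1)) := by
      funext s
      rw [hu]
      congr 1
      · rw [hAAdef, real_inner_smul_left]
      · refine Finset.sum_congr rfl fun i _ => ?_
        rw [ha]
        rw [real_inner_smul_left]
    rw [hfun, hD]
    exact (hasDerivAt_mul_const AA).sub
      (HasDerivAt.fun_sum fun i _ => mle_log_deriv (hp i).1.le (hp i).2.le s)
  have hDanti : Antitone D := by
    intro s t hst
    exact sub_le_sub_left
      (Finset.sum_le_sum fun i _ => mle_F_mono (a i) (hp i).1.le (hp i).2.le hst) AA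
  have hAA : AA = ∑ i, x i * a i := by
    rw [hAAdef, inner_sum]
    exact Finset.sum_congr rfl fun i _ => real_inner_smul_right _ _ _
  -- machine: a negative derivative at s₀ < 1 contradicts maximality
  have machine : ∀ s₀ : ℝ, s₀ < 1 → D s₀ < 0 → False := by
    intro s₀ hs₁ hneg
    have hcont : ContinuousOn (fun s => u (s • θhat)) (Set.Icc s₀ 1) :=
      fun s _ => ((hψderiv s).continuousAt).continuousWithinAt
    obtain ⟨ξ, hξ, hslope⟩ := exists_hasDerivAt_eq_slope (fun s => u (s • θhat)) D hs₁
      hcont (fun s _ => hψderiv s)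
    have h1 : D ξ ≤ D s₀ := hDanti hξ.1.le
    have hpos : 0 < 1 - s₀ := by linarith
    have h2 : u ((1:ℝ) • θhat) - u (s₀ • θhat) < 0 := by
      have h3 : u ((1:ℝ) • θhat) - u (s₀ • θhat) = D ξ * (1 - s₀) := by
        rw [hslope]
        field_simp
      rw [h3]
      exact mul_neg_of_neg_of_pos (lt_of_le_of_lt h1 hneg) hpos
    rw [one_smul] at h2
    have h4 := hmax (s₀ • θhat)
    linarith
  -- derivative bound at positive s₀
  have hDbound : ∀ s₀ : ℝ, 0 < s₀ →
      D s₀ ≤ (∑ i, (x i - p i) * a i)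
        - s₀ * (exp (-(s₀ * (‖θhat‖ * Lc))) * (lmin * ‖θhat‖ ^ 2)) := by
    intro s₀ hs₀
    have hsplit : D s₀ = (∑ i, (x i - p i) * a i)
        - ∑ i, (a i * (p i * exp (s₀ * a i) / (1 - p i + p i * exp (s₀ * a i)))
          - p i * a i) := by
      simp only [hD, hAA]
      rw [← Finset.sum_sub_distrib, ← Finset.sum_sub_distrib]
      exact Finset.sum_congr rfl fun i _ => by ring
    rw [hsplit]
    refine sub_le_sub_left ?_ _
    have hterm : ∀ i ∈ Finset.univ,
        p i * (1 - p i) * (s₀ * (exp (-(s₀ * (‖θhat‖ * Lc))) * a i ^ 2)) ≤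
        a i * (p i * exp (s₀ * a i) / (1 - p i + p i * exp (s₀ * a i))) - p i * a i := by
      intro i _
      refine mle_term_bound (hp i).1.le (hp i).2.le hs₀ ?_
      rw [abs_mul, abs_of_nonneg hs₀.le]
      exact mul_le_mul_of_nonneg_left (habound i) hs₀.le
    calc s₀ * (exp (-(s₀ * (‖θhat‖ * Lc))) * (lmin * ‖θhat‖ ^ 2))
        ≤ s₀ * (exp (-(s₀ * (‖θhat‖ * Lc))) * ⟪θhat, T θhat⟫) := by
          refine mul_le_mul_of_nonneg_left (mul_le_mul_of_nonneg_left ?_ (exp_pos _).le) hs₀.le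
          exact hTlow θhat
      _ = ∑ i, p i * (1 - p i) * (s₀ * (exp (-(s₀ * (‖θhat‖ * Lc))) * a i ^ 2)) := by
          rw [hquadid, Finset.mul_sum, Finset.mul_sum]
          exact Finset.sum_congr rfl fun i _ => by ring
      _ ≤ _ := Finset.sum_le_sum hterm
  -- final case split
  rcases eq_or_lt_of_le (norm_nonneg w') with hr0 | hrpos
  · -- r = 0
    have hw0 : w' = 0 := norm_eq_zero.1 hr0.symm
    have hS0 : S = 0 := by
      have h1 : V⁻¹ *ᵥ S = 0 := by
        have := congrArg e hw0
        simpa [hw'] using this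
      rw [← hVw, h1, Matrix.mulVec_zero]
    have hip0 : ∑ i, (x i - p i) * a i = 0 := by
      rw [hip_eq, hTw', hS0]
      simp
    refine machine (1/2) (by norm_num) ?_
    have hb := hDbound (1/2) (by norm_num)
    rw [hip0] at hb
    have hpos2 : 0 < (1/2 : ℝ) * (exp (-((1/2) * (‖θhat‖ * Lc))) * (lmin * ‖θhat‖ ^ 2)) := by
      positivity
    linarith
  · -- r > 0
    have hLcpos : 0 < Lc := by
      by_contra hLc0
      push_neg at hLc0
      have h1 : 3 * Lc * L ≤ 0 := by nlinarith
      have h2 : 1 / (3 * Lc * L) ≤ 0 := div_nonpos_of_nonneg_of_nonpos zero_le_one h1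
      have := hsmall
      linarith
    set s₀ := 3 * L * r / ‖θhat‖ with hs₀def
    have hs₀pos : 0 < s₀ :=
      div_pos (mul_pos (mul_pos (by norm_num) hLpos) hrpos) hθpos
    have hs₀lt1 : s₀ < 1 := (div_lt_one hθpos).2 hcon
    have hs₀norm : s₀ * ‖θhat‖ = 3 * L * r := by
      rw [hs₀def]
      exact div_mul_cancel₀ _ hθpos.ne'
    have hMeq : s₀ * (‖θhat‖ * Lc) = 3 * L * r * Lc := by
      rw [show s₀ * (‖θhat‖ * Lc) = s₀ * ‖θhat‖ * Lc from by ring, hs₀norm]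
    have hM1 : 3 * L * r * Lc ≤ 1 := by
      have h3 : 0 < 3 * Lc * L := by positivity
      have h4 := hsmall
      rw [le_div_iff₀ h3] at h4
      have h5 : 3 * L * r * Lc = r * (3 * Lc * L) := by ring
      linarith
    refine machine s₀ hs₀lt1 ?_
    have hb := hDbound s₀ hs₀pos
    have hexpb : exp (-1) ≤ exp (-(s₀ * (‖θhat‖ * Lc))) := by
      apply exp_le_exp.2
      rw [hMeq]
      linarith
    have hLlmin : L * lmin = lmax := by
      rw [hL]
      exact div_mul_cancel₀ _ hlminpos.ne'
    have hkey : s₀ * (exp (-(s₀ * (‖θhat‖ * Lc))) * (lmin * ‖θhat‖ ^ 2))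
        ≥ 3 * lmax * r * ‖θhat‖ * exp (-1) := by
      have h5 : s₀ * (lmin * ‖θhat‖ ^ 2) = 3 * lmax * r * ‖θhat‖ := by
        have : s₀ * (lmin * ‖θhat‖ ^ 2) = (s₀ * ‖θhat‖) * lmin * ‖θhat‖ := by ring
        rw [this, hs₀norm]
        rw [show 3 * L * r * lmin * ‖θhat‖ = 3 * (L * lmin) * r * ‖θhat‖ by ring, hLlmin]
      calc s₀ * (exp (-(s₀ * (‖θhat‖ * Lc))) * (lmin * ‖θhat‖ ^ 2))
          = (s₀ * (lmin * ‖θhat‖ ^ 2)) * exp (-(s₀ * (‖θhat‖ * Lc))) := by ring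
        _ ≥ (s₀ * (lmin * ‖θhat‖ ^ 2)) * exp (-1) := by
            exact mul_le_mul_of_nonneg_left hexpb
              (mul_nonneg hs₀pos.le (mul_nonneg hlminpos.le (sq_nonneg _)))
        _ = 3 * lmax * r * ‖θhat‖ * exp (-1) := by rw [h5]
    have hip : ∑ i, (x i - p i) * a i ≤ lmax * (‖θhat‖ * r) := hip_eq ▸ hip_le
    have hexp3 : 3 * exp (-1) > 1 := mle_exp3
    have hfin : lmax * (‖θhat‖ * r) - 3 * lmax * r * ‖θhat‖ * exp (-1) < 0 := by
      have h10 : 0 < lmax * r * ‖θhat‖ := mul_pos (mul_pos hlmaxpos hrpos) hθpos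
      have h11 := mul_pos h10 (show (0:ℝ) < 3 * exp (-1) - 1 by linarith only [hexp3])
      have h12 : lmax * (‖θhat‖ * r) - 3 * lmax * r * ‖θhat‖ * exp (-1)
          = -(lmax * r * ‖θhat‖ * (3 * exp (-1) - 1)) := by ring
      rw [h12]
      linarith only [h11]
    linarith only [hb, hip, hkey, hfin]
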